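/- Let u : [0,1] → ℝ be nonnegative with u² of class C¹, and suppose (u²)'(t) ≤ 2A(t)·u(t) + B(t)·u(t)² for continuous nonnegative functions A, B, with u(0) = 0. If u is C¹ wherever it is positive, then u(t) ≤ ∫₀ᵗ A(t')·exp(∫_{t'}^t B(t'')/2 dt'') dt' for all t ∈ [0,1]. -/

import Mathlib

open Set Real intervalIntegral Topology Filter

open MeasureTheory in
private lemma ftc_Icc {f : ℝ → ℝ} (hf : ContinuousOn f (Icc (0:ℝ) 1)) {b : ℝ}
    (hb : b ∈ Icc (0:ℝ) 1) :
    HasDerivWithinAt (fun x => ∫ s in (0:ℝ)..x, f s) (f b) (Icc (0:ℝ) 1) b := by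
  have hsub : uIcc (0:ℝ) b ⊆ Icc (0:ℝ) 1 := by
    rw [uIcc_of_le hb.1]; exact Icc_subset_Icc le_rfl hb.2
  have hint : IntervalIntegrable f volume 0 b := (hf.mono hsub).intervalIntegrable
  rcases eq_or_lt_of_le hb.1 with h0 | h0
  · -- b = 0
    have key : 𝓝[Icc (0:ℝ) 1] (0:ℝ) = 𝓝[Ici (0:ℝ)] 0 :=
      nhdsWithin_Icc_eq_nhdsGE zero_lt_one
    subst h0
    have hmeas : StronglyMeasurableAtFilter f (𝓝[Ioi (0:ℝ)] 0) volume := by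
      refine (hf.stronglyMeasurableAtFilter_nhdsWithin measurableSet_Icc 0).filter_mono ?_
      rw [key]; exact nhdsWithin_mono 0 Ioi_subset_Ici_self
    have hcont : ContinuousWithinAt f (Ioi (0:ℝ)) 0 := by
      refine ((hf 0 hb).mono_of_mem_nhdsWithin (by rw [← key]; exact self_mem_nhdsWithin)).mono
        (Ioi_subset_Ici_self (a := (0:ℝ)))
    exact (intervalIntegral.integral_hasDerivWithinAt_right (s := Ici (0:ℝ)) (t := Ioi (0:ℝ))
      hint hmeas hcont).mono Icc_subset_Ici_self
  rcases eq_or_lt_of_le hb.2 with h1 | h1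
  · -- b = 1
    subst h1
    have key : 𝓝[Icc (0:ℝ) 1] (1:ℝ) = 𝓝[Iic (1:ℝ)] 1 :=
      nhdsWithin_Icc_eq_nhdsLE zero_lt_one
    have hmeas : StronglyMeasurableAtFilter f (𝓝[Iic (1:ℝ)] 1) volume := by
      rw [← key]; exact hf.stronglyMeasurableAtFilter_nhdsWithin measurableSet_Icc 1
    have hcont : ContinuousWithinAt f (Iic (1:ℝ)) 1 :=
      (hf 1 hb).mono_of_mem_nhdsWithin (by rw [← key]; exact self_mem_nhdsWithin)
    exact (intervalIntegral.integral_hasDerivWithinAt_right (s := Iic (1:ℝ)) (t := Iic (1:ℝ))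
      hint hmeas hcont).mono Icc_subset_Iic_self
  · -- interior
    have hmem : Icc (0:ℝ) 1 ∈ 𝓝 b := Icc_mem_nhds h0 h1
    have hcont : ContinuousAt f b := (hf b hb).continuousAt hmem
    have hmeas : StronglyMeasurableAtFilter f (𝓝 b) volume := by
      have := hf.stronglyMeasurableAtFilter_nhdsWithin (μ := volume) measurableSet_Icc b
      rwa [nhdsWithin_eq_nhds.2 hmem] at this
    exact (intervalIntegral.integral_hasDerivAt_right hint hmeas hcont).hasDerivWithinAt

theorem sqrt_differential_inequality
    (u w A B : ℝ → ℝ)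
    (hu_nonneg : ∀ t ∈ Icc (0:ℝ) 1, 0 ≤ u t)
    (husq : ∀ t ∈ Icc (0:ℝ) 1, HasDerivAt (fun t => (u t) ^ 2) (w t) t)
    (hwcont : ContinuousOn w (Icc (0:ℝ) 1))
    (hA : ContinuousOn A (Icc (0:ℝ) 1)) (hA_nonneg : ∀ t ∈ Icc (0:ℝ) 1, 0 ≤ A t)
    (hB : ContinuousOn B (Icc (0:ℝ) 1)) (hB_nonneg : ∀ t ∈ Icc (0:ℝ) 1, 0 ≤ B t)
    (hineq : ∀ t ∈ Icc (0:ℝ) 1, w t ≤ 2 * A t * u t + B t * (u t) ^ 2)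
    (hu0 : u 0 = 0)
    (huC1 : ContDiffOn ℝ 1 u {t ∈ Icc (0:ℝ) 1 | 0 < u t}) :
    ∀ t ∈ Icc (0:ℝ) 1,
      u t ≤ ∫ t' in (0:ℝ)..t, A t' * Real.exp (∫ t'' in t'..t, B t'' / 2) := by
  classical
  set φ : ℝ → ℝ := fun t => ∫ s in (0:ℝ)..t, B s / 2 with hφdef
  have hB2 : ContinuousOn (fun s => B s / 2) (Icc (0:ℝ) 1) := hB.div_const 2
  have hφd : ∀ t ∈ Icc (0:ℝ) 1, HasDerivWithinAt φ (B t / 2) (Icc (0:ℝ) 1) t :=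
    fun t ht => ftc_Icc hB2 ht
  have hφc : ContinuousOn φ (Icc (0:ℝ) 1) := fun t ht => (hφd t ht).continuousWithinAt
  set Atil : ℝ → ℝ := fun t => A t * Real.exp (-φ t) with hAtdef
  have hAtc : ContinuousOn Atil (Icc (0:ℝ) 1) := hA.mul hφc.neg.rexp
  have hAt_nonneg : ∀ t ∈ Icc (0:ℝ) 1, 0 ≤ Atil t :=
    fun t ht => mul_nonneg (hA_nonneg t ht) (Real.exp_pos _).le
  set z : ℝ → ℝ := fun t => u t * Real.exp (-φ t) with hzdef
  have hu2c : ContinuousOn (fun t => u t ^ 2) (Icc (0:ℝ) 1) :=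
    fun t ht => ((husq t ht).continuousAt).continuousWithinAt
  have huc : ContinuousOn u (Icc (0:ℝ) 1) :=
    (Real.continuous_sqrt.comp_continuousOn hu2c).congr
      (fun t ht => (Real.sqrt_sq (hu_nonneg t ht)).symm)
  have hzc : ContinuousOn z (Icc (0:ℝ) 1) := huc.mul hφc.neg.rexp
  have hz_nonneg : ∀ t ∈ Icc (0:ℝ) 1, 0 ≤ z t :=
    fun t ht => mul_nonneg (hu_nonneg t ht) (Real.exp_pos _).le
  set g : ℝ → ℝ := fun t => u t ^ 2 * Real.exp (-(2 * φ t)) with hgdef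
  have hgz : ∀ t, g t = z t ^ 2 := by
    intro t
    have h2 : Real.exp (-φ t) ^ 2 = Real.exp (-(2 * φ t)) := by
      rw [sq, ← Real.exp_add]; ring_nf
    simp only [hgdef, hzdef, mul_pow, h2]
  have hgd : ∀ t ∈ Icc (0:ℝ) 1, HasDerivWithinAt g
      (w t * Real.exp (-(2 * φ t)) + u t ^ 2 * (Real.exp (-(2 * φ t)) * (-(2 * (B t / 2)))))
      (Icc (0:ℝ) 1) t := by
    intro t ht
    exact ((husq t ht).hasDerivWithinAt).mul ((((hφd t ht).const_mul 2).neg).exp)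
  -- KEY: comparison with v_ε
  have key : ∀ ε : ℝ, 0 < ε → ∀ t ∈ Icc (0:ℝ) 1,
      z t < ε * (1 + t) + ∫ s in (0:ℝ)..t, Atil s := by
    intro ε hε
    set v : ℝ → ℝ := fun t => ε * (1 + t) + ∫ s in (0:ℝ)..t, Atil s with hvdef
    have hvd : ∀ t ∈ Icc (0:ℝ) 1, HasDerivWithinAt v (ε + Atil t) (Icc (0:ℝ) 1) t := by
      intro t ht
      have h1 : HasDerivWithinAt (fun t : ℝ => ε * (1 + t)) (ε * 1) (Icc (0:ℝ) 1) t :=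
        ((((hasDerivAt_id t).const_add 1)).const_mul ε).hasDerivWithinAt
      have h2 := h1.add (ftc_Icc hAtc ht)
      convert h2 using 1
      · rfl
      · rfl
      · rfl
      · ring
    have hvc : ContinuousOn v (Icc (0:ℝ) 1) := fun t ht => (hvd t ht).continuousWithinAt
    have hv_pos : ∀ t ∈ Icc (0:ℝ) 1, ε ≤ v t := by
      intro t ht
      have hI : 0 ≤ ∫ s in (0:ℝ)..t, Atil s :=
        intervalIntegral.integral_nonneg ht.1
          (fun s hs => hAt_nonneg s ⟨hs.1, hs.2.trans ht.2⟩)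
      have : ε * 1 ≤ ε * (1 + t) := by nlinarith [ht.1]
      simp only [hvdef]; linarith
    by_contra hcon
    push_neg at hcon
    obtain ⟨t₁, ht₁, ht₁'⟩ := hcon
    set K : Set ℝ := {t | t ∈ Icc (0:ℝ) 1 ∧ v t ≤ z t} with hKdef
    have hKne : K.Nonempty := ⟨t₁, ht₁, ht₁'⟩
    have hKclosed : IsClosed K := by
      have hKeq : K = Icc (0:ℝ) 1 ∩ (fun t => z t - v t) ⁻¹' Ici 0 := by
        ext t
        simp only [hKdef, mem_setOf_eq, mem_inter_iff, mem_preimage, mem_Ici, sub_nonneg]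
      rw [hKeq]
      exact (hzc.sub hvc).preimage_isClosed_of_isClosed isClosed_Icc isClosed_Ici
    have hKbdd : BddBelow K := ⟨0, fun t ht => ht.1.1⟩
    set t₀ := sInf K with ht₀def
    have ht₀K : t₀ ∈ K := hKclosed.csInf_mem hKne hKbdd
    have ht₀Icc : t₀ ∈ Icc (0:ℝ) 1 := ht₀K.1
    have ht₀pos : 0 < t₀ := by
      rcases eq_or_lt_of_le ht₀Icc.1 with h | h
      · exfalso
        have hv0 : v 0 = ε := by simp [hvdef]
        have hz0 : z 0 = 0 := by simp [hzdef, hu0]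
        have hvz := ht₀K.2
        rw [← h, hv0, hz0] at hvz
        linarith
      · exact h
    have hsubIco : Ico (0:ℝ) t₀ ⊆ Icc (0:ℝ) 1 :=
      fun s hs => ⟨hs.1, hs.2.le.trans ht₀Icc.2⟩
    have hlt : ∀ t ∈ Ico (0:ℝ) t₀, z t < v t := by
      intro t ht
      by_contra h
      push_neg at h
      have : t₀ ≤ t := csInf_le hKbdd ⟨hsubIco ht, h⟩
      exact absurd ht.2 (not_lt.2 this)
    have hzv : z t₀ = v t₀ := by
      have hne : (𝓝[Ico (0:ℝ) t₀] t₀).NeBot := right_nhdsWithin_Ico_neBot ht₀pos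
      have htend : Filter.Tendsto (fun t => z t - v t) (𝓝[Ico (0:ℝ) t₀] t₀)
          (𝓝 (z t₀ - v t₀)) := ((hzc.sub hvc) t₀ ht₀Icc).mono hsubIco
      have hle0 : z t₀ - v t₀ ≤ 0 :=
        le_of_tendsto htend (Filter.eventually_of_mem self_mem_nhdsWithin
          (fun t ht => sub_nonpos.2 (hlt t ht).le))
      have := ht₀K.2
      linarith
    have hvt₀pos : 0 < v t₀ := lt_of_lt_of_le hε (hv_pos t₀ ht₀Icc)
    obtain ⟨d, hfd, hdle⟩ : ∃ d, HasDerivWithinAt (fun t => g t - v t ^ 2) d (Icc (0:ℝ) 1) t₀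
        ∧ d < 0 := by
      refine ⟨_, (hgd t₀ ht₀Icc).sub ((hvd t₀ ht₀Icc).pow 2), ?_⟩
      have hw := hineq t₀ ht₀Icc
      set P := Real.exp (-φ t₀) with hPdef
      have hPpos : (0:ℝ) < P := Real.exp_pos _
      have hEP : Real.exp (-(2 * φ t₀)) = P ^ 2 := by
        rw [hPdef, sq, ← Real.exp_add]; ring_nf
      have h2 : u t₀ * P = v t₀ := hzv
      have h1 : w t₀ * P ^ 2 ≤ 2 * A t₀ * v t₀ * P + B t₀ * v t₀ ^ 2 := by
        have h1' : w t₀ * P ^ 2 ≤ (2 * A t₀ * u t₀ + B t₀ * u t₀ ^ 2) * P ^ 2 :=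
          mul_le_mul_of_nonneg_right hw (sq_nonneg P)
        have h1'' : (2 * A t₀ * u t₀ + B t₀ * u t₀ ^ 2) * P ^ 2
            = 2 * A t₀ * v t₀ * P + B t₀ * v t₀ ^ 2 := by
          linear_combination (2 * A t₀ * P + B t₀ * (u t₀ * P + v t₀)) * h2
        linarith [h1'.trans_eq h1'']
      have h3 : u t₀ ^ 2 * (P ^ 2 * (-(2 * (B t₀ / 2)))) = -(B t₀ * v t₀ ^ 2) := by
        linear_combination (-(B t₀) * (u t₀ * P + v t₀)) * h2
      have hAt : Atil t₀ = A t₀ * P := rfl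
      rw [hEP, h3, hAt]
      push_cast
      nlinarith [h1, mul_pos hvt₀pos hε, hPpos]
    have hfd' := hfd.mono hsubIco
    have ht₀not : t₀ ∉ Ico (0:ℝ) t₀ := fun h => lt_irrefl _ h.2
    have hslope := (hasDerivWithinAt_iff_tendsto_slope' ht₀not).1 hfd'
    have hne : (𝓝[Ico (0:ℝ) t₀] t₀).NeBot := right_nhdsWithin_Ico_neBot ht₀pos
    have hft₀ : g t₀ - v t₀ ^ 2 = 0 := by rw [hgz, hzv]; ring
    have h0le : (0:ℝ) ≤ d := by
      refine ge_of_tendsto hslope (Filter.eventually_of_mem self_mem_nhdsWithin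
        fun t ht => ?_)
      have hftneg : g t - v t ^ 2 < 0 := by
        rw [hgz]
        have h1 := hlt t ht
        have h2 := hz_nonneg t (hsubIco ht)
        nlinarith
      rw [slope_comm, slope_def_field]
      apply div_nonneg
      · rw [hft₀]; linarith
      · linarith [ht.2]
    exact absurd h0le (not_le.2 hdle)
  -- conclude
  intro t ht
  have hzle : z t ≤ ∫ s in (0:ℝ)..t, Atil s := by
    by_contra hcon
    push_neg at hcon
    set I := ∫ s in (0:ℝ)..t, Atil s with hIdef
    have hδ : 0 < (z t - I) / 2 := by linarith
    have h := key ((z t - I) / 4) (by linarith) t ht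
    have ht2 : (1 : ℝ) + t ≤ 2 := by linarith [ht.2]
    nlinarith [h, ht.1]
  have hφsplit : ∀ s ∈ Icc (0:ℝ) t, (∫ r in s..t, B r / 2) = φ t - φ s := by
    intro s hs
    have h1 : IntervalIntegrable (fun r => B r / 2) MeasureTheory.volume 0 s :=
      (hB2.mono (by rw [uIcc_of_le hs.1]; exact Icc_subset_Icc le_rfl (hs.2.trans ht.2))).intervalIntegrable
    have h2 : IntervalIntegrable (fun r => B r / 2) MeasureTheory.volume s t :=
      (hB2.mono (by rw [uIcc_of_le hs.2]; exact Icc_subset_Icc hs.1 ht.2)).intervalIntegrable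
    have h3 := intervalIntegral.integral_add_adjacent_intervals h1 h2
    simp only [hφdef]
    linarith [h3]
  have hfinal : (∫ t' in (0:ℝ)..t, A t' * Real.exp (∫ t'' in t'..t, B t'' / 2))
      = Real.exp (φ t) * ∫ s in (0:ℝ)..t, Atil s := by
    rw [← intervalIntegral.integral_const_mul]
    apply intervalIntegral.integral_congr
    intro s hs
    rw [uIcc_of_le ht.1] at hs
    show A s * Real.exp (∫ r in s..t, B r / 2) = Real.exp (φ t) * Atil s
    rw [hφsplit s hs]
    simp only [hAtdef]
    rw [sub_eq_add_neg, Real.exp_add]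
    ring
  rw [hfinal]
  have huz : u t = Real.exp (φ t) * z t := by
    simp only [hzdef]
    rw [← mul_assoc, mul_comm (Real.exp (φ t)), mul_assoc, ← Real.exp_add]
    simp
  rw [huz]
  exact mul_le_mul_of_nonneg_left hzle (Real.exp_pos (φ t)).le
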